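/- Let G be a topological group acting continuously on a nonempty compact convex subset K of a Hausdorff locally convex real topological vector space, in such a way that for every g ∈ G the map x ↦ g • x is affine (g • (t·x + (1−t)·y) = t·(g • x) + (1−t)·(g • y) for all x, y ∈ K and t ∈ [0,1]). Then the action has a fixed point if and only if K carries a Borel probability measure invariant under the action. -/

import Mathlib

open MeasureTheory

/-- Let `G` be a topological group acting continuously on a nonempty compact
convex subset `K` of a Hausdorff locally convex real topological vector space, with each `g`
acting affinely.  Then the action has a fixed point iff `K` carries an invariant Borel
probability measure. -/
theorem stmt_0 (G : Type) [Group G] [TopologicalSpace G] [IsTopologicalGroup G]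
    (E : Type) [AddCommGroup E] [Module ℝ E] [TopologicalSpace E]
    [IsTopologicalAddGroup E] [ContinuousSMul ℝ E] [T2Space E] [LocallyConvexSpace ℝ E]
    (K : Set E) (hKcomp : IsCompact K) (hKconv : Convex ℝ K) (hKne : K.Nonempty)
    [MeasurableSpace K] [BorelSpace K]
    (act : G → K → K)
    (hone : ∀ x, act 1 x = x)
    (hmul : ∀ g h x, act (g * h) x = act g (act h x))
    (hcont : Continuous fun p : G × K => act p.1 p.2)
    (haff : ∀ (g : G) (x y : K) (t : ℝ) (ht0 : 0 ≤ t) (ht1 : t ≤ 1),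
      (act g ⟨t • (x : E) + (1 - t) • (y : E),
          hKconv x.2 y.2 ht0 (by linarith) (by ring)⟩ : E)
        = t • (act g x : E) + (1 - t) • (act g y : E)) :
    (∃ x : K, ∀ g : G, act g x = x) ↔
      (∃ μ : Measure K, IsProbabilityMeasure μ ∧
        ∀ (g : G) (B : Set K), MeasurableSet B → μ (act g ⁻¹' B) = μ B) := by
  haveI : CompactSpace K := isCompact_iff_compactSpace.mp hKcomp
  have hgc : ∀ g : G, Continuous (act g) := fun g =>
    hcont.comp (Continuous.prodMk_right g)
  constructor
  · rintro ⟨x, hx⟩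
    refine ⟨Measure.dirac x, inferInstance, fun g B hB => ?_⟩
    rw [Measure.dirac_apply' _ ((hgc g).measurable hB), Measure.dirac_apply' _ hB]
    have hmem : x ∈ act g ⁻¹' B ↔ x ∈ B := by
      rw [Set.mem_preimage, hx g]
    by_cases hxB : x ∈ B
    · rw [Set.indicator_of_mem (hmem.mpr hxB), Set.indicator_of_mem hxB]
    · rw [Set.indicator_of_notMem (fun h => hxB (hmem.mp h)),
        Set.indicator_of_notMem hxB]
  · rintro ⟨μ, hμ, hinv⟩
    haveI : IsProbabilityMeasure μ := hμ
    -- integrability of continuous functions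
    have hint : ∀ {V : Type} [NormedAddCommGroup V] (f : K → V), Continuous f →
        Integrable f μ := by
      intro V _ f hf
      exact hf.integrable_of_hasCompactSupport (HasCompactSupport.of_compactSpace f)
    -- the predicate of being continuous affine
    set P : (K → ℝ) → Prop := fun φ => Continuous φ ∧
      ∀ (x y : K) (t : ℝ) (ht0 : 0 ≤ t) (ht1 : t ≤ 1),
        φ ⟨t • (x : E) + (1 - t) • (y : E),
            hKconv x.2 y.2 ht0 (by linarith) (by ring)⟩ = t * φ x + (1 - t) * φ y
      with hP
    set ι : Type := {φ : K → ℝ // P φ} with hι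
    set A : ι → Set K := fun i => {x : K | i.1 x = ∫ z, i.1 z ∂μ} with hA
    have hAclosed : ∀ i, IsClosed (A i) := fun i =>
      isClosed_eq i.2.1 continuous_const
    -- the finite intersection property
    have hfin : ∀ u : Finset ι, (Set.univ ∩ ⋂ i ∈ u, A i).Nonempty := by
      intro u
      by_contra hemp
      rw [Set.not_nonempty_iff_eq_empty] at hemp
      -- the evaluation map to a finite-dimensional space
      set T : K → (↥u → ℝ) := fun x i => (i : ι).1 x with hT
      have hTc : Continuous T := continuous_pi fun i => (i : ι).2.1
      set y : ↥u → ℝ := fun i => ∫ z, (i : ι).1 z ∂μ with hy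
      have hconvim : Convex ℝ (T '' Set.univ) := by
        rintro _ ⟨a, -, rfl⟩ _ ⟨b, -, rfl⟩ s r hs hr hsr
        have hr' : r = 1 - s := by linarith
        subst hr'
        refine ⟨⟨s • (a : E) + (1 - s) • (b : E),
          hKconv a.2 b.2 hs (by linarith) (by ring)⟩, trivial, ?_⟩
        funext i
        have := (i : ι).2.2 a b s hs (by linarith)
        simpa [hT] using this
      have hclim : IsClosed (T '' Set.univ) :=
        (isCompact_univ.image hTc).isClosed
      have hynotin : y ∉ T '' Set.univ := by
        rintro ⟨x, -, hxy⟩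
        have hx : x ∈ Set.univ ∩ ⋂ i ∈ u, A i := by
          refine ⟨trivial, Set.mem_iInter₂.2 fun i hi => ?_⟩
          have := congrFun hxy ⟨i, hi⟩
          simpa [hT, hy, hA] using this
        rw [hemp] at hx
        exact hx
      obtain ⟨f, c, hfc, hcy⟩ :=
        geometric_hahn_banach_closed_point hconvim hclim hynotin
      have hTint : Integrable T μ := hint T hTc
      have hTintegral : ∫ z, T z ∂μ = y := by
        funext i
        have h1 := (ContinuousLinearMap.proj (R := ℝ) (φ := fun _ : ↥u => ℝ)
          i).integral_comp_comm hTint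
        simpa [hT, hy] using h1.symm
      have hfy : f y = ∫ z, f (T z) ∂μ := by
        rw [← hTintegral, f.integral_comp_comm hTint]
      have hle : ∫ z, f (T z) ∂μ ≤ c := by
        calc ∫ z, f (T z) ∂μ ≤ ∫ _, c ∂μ := by
              refine integral_mono (hint _ (f.continuous.comp hTc)) (integrable_const c)
                fun z => le_of_lt (hfc (T z) ⟨z, trivial, rfl⟩)
          _ = c := by simp
      rw [hfy] at hcy
      exact absurd (hcy.trans_le hle) (lt_irrefl c)
    -- obtain a common point of all the sets
    have hne : (Set.univ ∩ ⋂ i, A i).Nonempty := by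
      by_contra hemp
      rw [Set.not_nonempty_iff_eq_empty] at hemp
      obtain ⟨u, hu⟩ := isCompact_univ.elim_finite_subfamily_closed A hAclosed hemp
      obtain ⟨x, hx⟩ := hfin u
      rw [hu] at hx
      exact hx
    obtain ⟨b, -, hb⟩ := hne
    have key : ∀ φ : K → ℝ, P φ → φ b = ∫ z, φ z ∂μ := fun φ hφ =>
      Set.mem_iInter.mp hb ⟨φ, hφ⟩
    refine ⟨b, fun g => ?_⟩
    -- pushforward of μ under act g is μ
    have hmap : Measure.map (act g) μ = μ := by
      refine Measure.ext fun B hB => ?_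
      rw [Measure.map_apply (hgc g).measurable hB, hinv g B hB]
    have hfix : ∀ f : E →L[ℝ] ℝ, f (act g b : E) = f (b : E) := by
      intro f
      have h1 : P (fun x : K => f (x : E)) := by
        refine ⟨f.continuous.comp continuous_subtype_val, fun x y t ht0 ht1 => ?_⟩
        simp [map_add, _root_.map_smul, smul_eq_mul]
      have h2 : P (fun x : K => f (act g x : E)) := by
        refine ⟨f.continuous.comp ((continuous_subtype_val).comp (hgc g)),
          fun x y t ht0 ht1 => ?_⟩
        simp only [haff g x y t ht0 ht1, map_add, _root_.map_smul, smul_eq_mul]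
      have e1 : f (b : E) = ∫ z, f (z : E) ∂μ := key _ h1
      have e2 : f (act g b : E) = ∫ z, f (act g z : E) ∂μ := key _ h2
      have e3 : ∫ z, f (act g z : E) ∂μ = ∫ z, f (z : E) ∂μ := by
        have h4 := integral_map (μ := μ) (hgc g).measurable.aemeasurable
          ((f.continuous.comp continuous_subtype_val).aestronglyMeasurable)
        rw [hmap] at h4
        simpa [Function.comp] using h4.symm
      rw [e1, e2, e3]
    have : (act g b : E) = (b : E) := by
      by_contra hne'
      obtain ⟨f, hf⟩ := SeparatingDual.exists_separating_of_ne (R := ℝ) hne'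
      exact hf (hfix f)
    exact Subtype.ext this
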